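/- For every even q ≥ 2 and every g ≥ 0, the graph G_q(g) has at least one perfect matching. -/

import Mathlib

/-- Edge corona product `G ⊛ K_q`: keep `G`, and for each edge of `G` add a fresh
copy of the complete graph on `q` vertices, joining all its vertices to both
endpoints of the edge. -/
def edgeCorona {V : Type} (G : SimpleGraph V) (q : ℕ) :
    SimpleGraph (V ⊕ (G.edgeSet × Fin q)) where
  Adj := fun x y => match x, y with
    | Sum.inl u, Sum.inl v => G.Adj u v
    | Sum.inl u, Sum.inr p => u ∈ (p.1 : Sym2 V)
    | Sum.inr p, Sum.inl v => v ∈ (p.1 : Sym2 V)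
    | Sum.inr p, Sum.inr r => p.1 = r.1 ∧ p.2 ≠ r.2
  symm := ⟨by
    rintro (u | p) (v | r) h
    · exact G.adj_symm h
    · exact h
    · exact h
    · exact ⟨h.1.symm, h.2.symm⟩⟩
  loopless := ⟨by
    rintro (u | p) h
    · exact G.irrefl h
    · exact h.2 rfl⟩

/-- The simplicial network `G_q(g)` together with its vertex type:
`G_q(0) = K_{q+2}` and `G_q(g+1) = G_q(g) ⊛ K_q`. -/
def Gaux (q : ℕ) : ℕ → Σ V : Type, SimpleGraph V
  | 0 => ⟨Fin (q + 2), ⊤⟩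
  | g + 1 => ⟨_, edgeCorona (Gaux q g).2 q⟩

abbrev GVert (q g : ℕ) : Type := (Gaux q g).1

abbrev Gnet (q g : ℕ) : SimpleGraph (GVert q g) := (Gaux q g).2

/-- The `q+2` hub nodes of `G_q(g)`: the vertices present from iteration `0`. -/
def hub (q : ℕ) : (g : ℕ) → Fin (q + 2) → GVert q g
  | 0 => id
  | g + 1 => fun k => Sum.inl (hub q g k)

/-- Pairing involution on `Fin n` for even `n`. -/
def pairFin {n : ℕ} (hn : n % 2 = 0) (i : Fin n) : Fin n :=
  if h : i.val % 2 = 0 then ⟨i.val + 1, by have := i.isLt; omega⟩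
  else ⟨i.val - 1, by have := i.isLt; omega⟩

lemma pairFin_ne {n : ℕ} (hn : n % 2 = 0) (i : Fin n) : pairFin hn i ≠ i := by
  unfold pairFin
  split
  · next h => intro he; rw [Fin.ext_iff] at he; simp only [Fin.val_mk] at he; omega
  · next h => intro he; rw [Fin.ext_iff] at he; simp only [Fin.val_mk] at he; omega

lemma pairFin_invol {n : ℕ} (hn : n % 2 = 0) (i : Fin n) :
    pairFin hn (pairFin hn i) = i := by
  have hi := i.isLt
  unfold pairFin
  split
  · next h =>
    rw [dif_neg (by simp only [Fin.val_mk]; omega)]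
    apply Fin.ext; simp only [Fin.val_mk]; omega
  · next h =>
    rw [dif_pos (by simp only [Fin.val_mk]; omega)]
    apply Fin.ext; simp only [Fin.val_mk]; omega

/-- A fixed-point-free adjacency involution gives a perfect matching. -/
lemma pm_of_invol {V : Type} (G : SimpleGraph V) (f : V → V)
    (hinv : ∀ v, f (f v) = v) (hadj : ∀ v, G.Adj v (f v)) :
    ∃ M : G.Subgraph, M.IsPerfectMatching := by
  refine ⟨⟨Set.univ, fun v w => f v = w, ?_, fun _ => trivial, ?_⟩, ?_⟩
  · rintro v w rfl; exact hadj v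
  · exact ⟨by rintro v w rfl; exact hinv v⟩
  · rw [SimpleGraph.Subgraph.isPerfectMatching_iff]
    exact fun v => ⟨f v, rfl, fun y hy => Eq.symm hy⟩

lemma exists_invol (q : ℕ) (hq : q % 2 = 0) (g : ℕ) :
    ∃ f : GVert q g → GVert q g,
      (∀ v, f (f v) = v) ∧ ∀ v, (Gnet q g).Adj v (f v) := by
  induction g with
  | zero =>
    have hn : (q + 2) % 2 = 0 := by omega
    refine ⟨pairFin hn, pairFin_invol hn, fun v => ?_⟩
    exact (pairFin_ne hn v).symm
  | succ g ih =>
    obtain ⟨f, hinv, hadj⟩ := ih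
    refine ⟨fun x => match x with
      | Sum.inl v => Sum.inl (f v)
      | Sum.inr (e, i) => Sum.inr (e, pairFin hq i), ?_, ?_⟩
    · rintro (v | ⟨e, i⟩)
      · simp [hinv v]; rfl
      · simp [pairFin_invol hq i]; rfl
    · rintro (v | ⟨e, i⟩)
      · exact hadj v
      · exact ⟨rfl, fun h => pairFin_ne hq i h.symm⟩

/-- For every even `q ≥ 2` and every `g ≥ 0`, `G_q(g)` has a perfect matching. -/
theorem exists_perfectMatching (q g : ℕ) (hq : Even q) (hq2 : 2 ≤ q) :
    ∃ M : (Gnet q g).Subgraph, M.IsPerfectMatching := by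
  obtain ⟨f, hinv, hadj⟩ := exists_invol q (Nat.even_iff.mp hq) g
  exact pm_of_invol _ f hinv hadj
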